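/- For every m ≥ 1 and every even n ≥ 2, the number of m-tuples (α_1,…,α_m) ∈ F_n^m that have overlapping matches is at most (4m⁴/n)·|F_n|^m; equivalently, a uniformly random element of F_n^m has no overlapping matches with probability at least 1 − 4m⁴/n. -/

import Mathlib

open scoped Classical

/-- The set of fixed-point-free involutions of `{1,…,n}` (modeled on `Fin n`). -/
noncomputable def fpf (n : ℕ) : Finset (Equiv.Perm (Fin n)) :=
  Finset.univ.filter (fun σ => σ * σ = 1 ∧ ∀ i, σ i ≠ i)

/-- A tuple `(α_1, …, α_m)` has overlapping matches if there are unordered pairs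
`{i,j} ≠ {i',j'}` with `i ≠ j`, `i' ≠ j'` and some `k` with `α_i(k) = α_j(k)` and
`α_{i'}(k) = α_{j'}(k)`. -/
def hasOverlappingMatches {m n : ℕ} (α : Fin m → Equiv.Perm (Fin n)) : Prop :=
  ∃ k : Fin n, ∃ i j i' j' : Fin m, i ≠ j ∧ i' ≠ j' ∧
    ({i, j} : Finset (Fin m)) ≠ ({i', j'} : Finset (Fin m)) ∧
    α i k = α j k ∧ α i' k = α j' k

lemma mem_fpf {n : ℕ} {σ : Equiv.Perm (Fin n)} :
    σ ∈ fpf n ↔ σ * σ = 1 ∧ ∀ i, σ i ≠ i := by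
  simp [fpf]

lemma fiber_card_eq (n : ℕ) (k v w : Fin n) (hv : v ≠ k) (hw : w ≠ k) :
    ((fpf n).filter (fun σ => σ k = v)).card
      = ((fpf n).filter (fun σ => σ k = w)).card := by
  classical
  set τ := Equiv.swap v w with hτ
  have hτk : τ k = k := Equiv.swap_apply_of_ne_of_ne (Ne.symm hv) (Ne.symm hw)
  have hττ : ∀ x, τ (τ x) = x := fun x => Equiv.swap_apply_self v w x
  have hmem : ∀ (u u' : Fin n), u ≠ k → u' ≠ k → τ u = u' →
      ∀ σ ∈ (fpf n).filter (fun σ => σ k = u),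
        (τ * σ * τ : Equiv.Perm (Fin n)) ∈ (fpf n).filter (fun σ => σ k = u') := by
    intro u u' hu hu' huu' σ hσ
    rw [Finset.mem_filter] at hσ ⊢
    obtain ⟨hσf, hσk⟩ := hσ
    rw [mem_fpf] at hσf
    obtain ⟨hinv, hfpf⟩ := hσf
    have hσσ : ∀ x, σ (σ x) = x := by
      intro x
      have := congrArg (fun e => e x) hinv
      simpa [Equiv.Perm.mul_apply] using this
    constructor
    · rw [mem_fpf]
      constructor
      · ext x
        simp [Equiv.Perm.mul_apply, hττ, hσσ]
      · intro i h
        simp only [Equiv.Perm.mul_apply] at h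
        have : σ (τ i) = τ i := by
          have := congrArg τ h
          rwa [hττ] at this
        exact hfpf (τ i) this
    · simp [Equiv.Perm.mul_apply, hτk, hσk, huu']
  apply Finset.card_bij' (fun σ _ => τ * σ * τ) (fun σ _ => τ * σ * τ)
  · exact hmem v w hv hw (Equiv.swap_apply_left v w)
  · exact hmem w v hw hv (Equiv.swap_apply_right v w)
  · intro σ _
    ext x
    simp [Equiv.Perm.mul_apply, hττ]
  · intro σ _
    ext x
    simp [Equiv.Perm.mul_apply, hττ]

lemma fiber_card_le (n : ℕ) (k w : Fin n) :
    (n - 1) * ((fpf n).filter (fun σ => σ k = w)).card ≤ (fpf n).card := by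
  classical
  by_cases hw : w = k
  · subst hw
    have : (fpf n).filter (fun σ => σ w = w) = ∅ := by
      rw [Finset.filter_eq_empty_iff]
      intro σ hσ
      exact (mem_fpf.1 hσ).2 w
    simp [this]
  · have h1 : (fpf n).card
        = ∑ v ∈ Finset.univ, ((fpf n).filter (fun σ => σ k = v)).card :=
      Finset.card_eq_sum_card_fiberwise (fun σ _ => Finset.mem_univ _)
    have h2 : ∑ v ∈ Finset.univ.erase k, ((fpf n).filter (fun σ => σ k = v)).card
        ≤ ∑ v ∈ Finset.univ, ((fpf n).filter (fun σ => σ k = v)).card :=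
      Finset.sum_le_sum_of_subset (Finset.erase_subset _ _)
    have h3 : ∑ v ∈ Finset.univ.erase k, ((fpf n).filter (fun σ => σ k = v)).card
        = (n - 1) * ((fpf n).filter (fun σ => σ k = w)).card := by
      rw [Finset.sum_congr rfl (fun v hv =>
        fiber_card_eq n k v w (Finset.mem_erase.1 hv).1 hw)]
      rw [Finset.sum_const, Finset.card_erase_of_mem (Finset.mem_univ _)]
      simp [mul_comm]
    omega

lemma prod_count (m n : ℕ) (hm : 2 ≤ m) (k : Fin n) (a b c d : Fin m)
    (hab : a ≠ b) (hca : c ≠ a) (hcb : c ≠ b) (hda : d ≠ a) (hdb : d ≠ b) :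
    (n - 1) ^ 2 * (Finset.univ.filter (fun α : Fin m → Equiv.Perm (Fin n) =>
        (∀ t, α t ∈ fpf n) ∧ α a k = α c k ∧ α b k = α d k)).card
      ≤ (fpf n).card ^ m := by
  classical
  set F := fpf n with hF
  set S := Finset.univ.filter (fun α : Fin m → Equiv.Perm (Fin n) =>
      (∀ t, α t ∈ fpf n) ∧ α a k = α c k ∧ α b k = α d k) with hS
  set T : Finset (Fin m → Equiv.Perm (Fin n)) :=
    Fintype.piFinset (fun t => if t = a ∨ t = b then ({1} : Finset (Equiv.Perm (Fin n))) else F)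
      with hT
  set f : (Fin m → Equiv.Perm (Fin n)) → (Fin m → Equiv.Perm (Fin n)) :=
    fun α t => if t = a ∨ t = b then 1 else α t with hf
  have hmap : ∀ α ∈ S, f α ∈ T := by
    intro α hα
    rw [Fintype.mem_piFinset]
    intro t
    rw [Finset.mem_filter] at hα
    by_cases h : t = a ∨ t = b <;> simp [hf, hF, h, hα.2.1 t]
  have hsum : S.card = ∑ g ∈ T, (S.filter (fun α => f α = g)).card :=
    Finset.card_eq_sum_card_fiberwise hmap
  -- fiber bound
  have hfib : ∀ g ∈ T, (n - 1) ^ 2 * (S.filter (fun α => f α = g)).card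
      ≤ F.card ^ 2 := by
    intro g _
    have hcard : (S.filter (fun α => f α = g)).card
        ≤ ((F.filter (fun σ => σ k = g c k)) ×ˢ (F.filter (fun σ => σ k = g d k))).card := by
      apply Finset.card_le_card_of_injOn (fun α => (α a, α b))
      · intro α hα
        simp only [Finset.mem_coe, Finset.mem_filter, Finset.mem_univ, true_and, hS] at hα
        obtain ⟨⟨hmem, hac, hbd⟩, hfg⟩ := hα
        have hgc : g c = α c := by
          rw [← hfg]; simp [hf, hca, hcb]
        have hgd : g d = α d := by
          rw [← hfg]; simp [hf, hda, hdb]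
        rw [Finset.mem_coe, Finset.mem_product]
        constructor
        · rw [Finset.mem_filter]
          exact ⟨hmem a, by rw [hgc, hac]⟩
        · rw [Finset.mem_filter]
          exact ⟨hmem b, by rw [hgd, hbd]⟩
      · intro α hα β hβ hab'
        simp only [Finset.coe_filter, Set.mem_setOf_eq] at hα hβ
        obtain ⟨ha1, ha2⟩ := Prod.ext_iff.1 hab'
        funext t
        by_cases hta : t = a
        · subst hta; exact ha1
        by_cases htb : t = b
        · subst htb; exact ha2
        · have h1 := congrFun hα.2 t
          have h2 := congrFun hβ.2 t
          simp only [hf, hta, htb, or_self, if_false] at h1 h2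
          rw [h1, h2]
    have hprod : ((F.filter (fun σ => σ k = g c k)) ×ˢ (F.filter (fun σ => σ k = g d k))).card
        = (F.filter (fun σ => σ k = g c k)).card * (F.filter (fun σ => σ k = g d k)).card :=
      Finset.card_product _ _
    calc (n - 1) ^ 2 * (S.filter (fun α => f α = g)).card
        ≤ (n - 1) ^ 2 * ((F.filter (fun σ => σ k = g c k)).card
            * (F.filter (fun σ => σ k = g d k)).card) := by
          apply Nat.mul_le_mul_left
          rw [← hprod]; exact hcard
      _ = ((n - 1) * (F.filter (fun σ => σ k = g c k)).card)
            * ((n - 1) * (F.filter (fun σ => σ k = g d k)).card) := by ring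
      _ ≤ F.card * F.card :=
          Nat.mul_le_mul (fiber_card_le n k _) (fiber_card_le n k _)
      _ = F.card ^ 2 := (sq F.card).symm
  -- card of T
  have hTcard : T.card = F.card ^ (m - 2) := by
    rw [hT, Fintype.card_piFinset]
    have : ∀ t : Fin m,
        (if t = a ∨ t = b then ({1} : Finset (Equiv.Perm (Fin n))) else F).card
          = if t = a ∨ t = b then 1 else F.card := by
      intro t; by_cases h : t = a ∨ t = b <;> simp [h]
    rw [Finset.prod_congr rfl (fun t _ => this t)]
    rw [Finset.prod_ite, Finset.prod_const_one, one_mul, Finset.prod_const]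
    congr 1
    have : Finset.univ.filter (fun t : Fin m => ¬(t = a ∨ t = b))
        = Finset.univ \ {a, b} := by
      ext t; simp [not_or]
    rw [this, Finset.card_sdiff_of_subset (Finset.subset_univ _), Finset.card_univ,
      Fintype.card_fin, Finset.card_insert_of_notMem (by simp [hab]),
      Finset.card_singleton]
  calc (n - 1) ^ 2 * S.card
      = ∑ g ∈ T, (n - 1) ^ 2 * (S.filter (fun α => f α = g)).card := by
        rw [hsum, Finset.mul_sum]
    _ ≤ ∑ _g ∈ T, F.card ^ 2 := Finset.sum_le_sum hfib
    _ = T.card * F.card ^ 2 := by rw [Finset.sum_const, smul_eq_mul]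
    _ = F.card ^ (m - 2) * F.card ^ 2 := by rw [hTcard]
    _ = F.card ^ m := by rw [← pow_add, Nat.sub_add_cancel hm]

lemma exists_abcd {m : ℕ} {X : Type*} (i j i' j' : Fin m) (hij : i ≠ j) (hij' : i' ≠ j')
    (hne : ({i, j} : Finset (Fin m)) ≠ ({i', j'} : Finset (Fin m))) :
    ∃ a b c d : Fin m, a ≠ b ∧ c ≠ a ∧ c ≠ b ∧ d ≠ a ∧ d ≠ b ∧
      ∀ β : Fin m → X, β i = β j → β i' = β j' → β a = β c ∧ β b = β d := by
  classical
  -- there is an element of {i,j} not in {i',j'}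
  have hsub : ¬ (({i, j} : Finset (Fin m)) ⊆ {i', j'}) := by
    intro hs
    apply hne
    apply Finset.eq_of_subset_of_card_le hs
    calc ({i', j'} : Finset (Fin m)).card ≤ 2 :=
          (Finset.card_insert_le _ _).trans (by simp)
      _ = ({i, j} : Finset (Fin m)).card := by
          rw [Finset.card_insert_of_notMem (by simp [hij]), Finset.card_singleton]
  obtain ⟨x, hx, hx'⟩ := Finset.not_subset.1 hsub
  -- key: if a ∈ {i,j}, a ∉ {i',j'}, a' the other one
  have key : ∀ a a' : Fin m, a ≠ a' → a ≠ i' → a ≠ j' →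
      ∃ a₀ b c d : Fin m, a₀ ≠ b ∧ c ≠ a₀ ∧ c ≠ b ∧ d ≠ a₀ ∧ d ≠ b ∧
        ∀ β : Fin m → X, β a = β a' → β i' = β j' → β a₀ = β c ∧ β b = β d := by
    intro a a' haa' hai' haj'
    by_cases h1 : a' = i'
    · exact ⟨a, a', j', j', haa', fun h => haj' h.symm, by rw [h1]; exact hij'.symm,
        fun h => haj' h.symm, by rw [h1]; exact hij'.symm,
        fun β hp hp' => ⟨by rw [hp, h1, hp'], by rw [h1, hp']⟩⟩
    by_cases h2 : a' = j'
    · exact ⟨a, a', i', i', haa', fun h => hai' h.symm, by rw [h2]; exact hij',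
        fun h => hai' h.symm, by rw [h2]; exact hij',
        fun β hp hp' => ⟨by rw [hp, h2, hp'], by rw [h2, hp']⟩⟩
    · exact ⟨a, i', a', j', hai', fun h => haa' h.symm, h1, fun h => haj' h.symm, hij'.symm,
        fun β hp hp' => ⟨hp, hp'⟩⟩
  have hxij : x = i ∨ x = j := by simpa using hx
  have hxi' : x ≠ i' := by intro h; exact hx' (by simp [h])
  have hxj' : x ≠ j' := by intro h; exact hx' (by simp [h])
  rcases hxij with h | h
  · subst h
    obtain ⟨a₀, b, c, d, h1, h2, h3, h4, h5, h6⟩ := key x j hij hxi' hxj'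
    exact ⟨a₀, b, c, d, h1, h2, h3, h4, h5, fun β hp hp' => h6 β hp hp'⟩
  · subst h
    obtain ⟨a₀, b, c, d, h1, h2, h3, h4, h5, h6⟩ := key x i hij.symm hxi' hxj'
    exact ⟨a₀, b, c, d, h1, h2, h3, h4, h5, fun β hp hp' => h6 β hp.symm hp'⟩

/-- The number of `m`-tuples of fixed-point-free involutions of `{1,…,n}` with
overlapping matches is at most `(4m⁴/n)·|F_n|^m`. -/
theorem card_overlapping_matches_le (m n : ℕ) (hm : 1 ≤ m) (hn : Even n) (h2 : 2 ≤ n) :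
    ((Finset.univ.filter (fun α : Fin m → Equiv.Perm (Fin n) =>
        (∀ i, α i ∈ fpf n) ∧ hasOverlappingMatches α)).card : ℝ)
      ≤ (4 * m ^ 4 / n) * ((fpf n).card : ℝ) ^ m := by
  classical
  rcases Nat.lt_or_ge m 2 with hm1 | hm2
  · -- m = 1 : there are no pairs i ≠ j, so the set is empty
    have hme : m = 1 := by omega
    subst hme
    have : (Finset.univ.filter (fun α : Fin 1 → Equiv.Perm (Fin n) =>
        (∀ i, α i ∈ fpf n) ∧ hasOverlappingMatches α)) = ∅ := by
      rw [Finset.filter_eq_empty_iff]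
      rintro α - ⟨-, k, i, j, i', j', hij, -⟩
      exact hij (Subsingleton.elim i j)
    rw [this]
    simp only [Finset.card_empty, Nat.cast_zero]
    positivity
  set L := Finset.univ.filter (fun α : Fin m → Equiv.Perm (Fin n) =>
      (∀ i, α i ∈ fpf n) ∧ hasOverlappingMatches α) with hL
  set Q : Finset (Fin n × Fin m × Fin m × Fin m × Fin m) :=
    Finset.univ.filter (fun q => q.2.1 ≠ q.2.2.1 ∧ q.2.2.2.1 ≠ q.2.2.2.2 ∧
      ({q.2.1, q.2.2.1} : Finset (Fin m)) ≠ ({q.2.2.2.1, q.2.2.2.2} : Finset (Fin m)))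
      with hQ
  set S : Fin n × Fin m × Fin m × Fin m × Fin m → Finset (Fin m → Equiv.Perm (Fin n)) :=
    fun q => Finset.univ.filter (fun α => (∀ t, α t ∈ fpf n) ∧
      α q.2.1 q.1 = α q.2.2.1 q.1 ∧ α q.2.2.2.1 q.1 = α q.2.2.2.2 q.1) with hSdef
  -- union bound
  have hsub : L ⊆ Q.biUnion S := by
    intro α hα
    rw [Finset.mem_filter] at hα
    obtain ⟨_, hmem, k, i, j, i', j', hij, hij', hne, h1, h2'⟩ := hα
    rw [Finset.mem_biUnion]
    refine ⟨(k, i, j, i', j'), ?_, ?_⟩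
    · rw [hQ, Finset.mem_filter]
      exact ⟨Finset.mem_univ _, hij, hij', hne⟩
    · rw [hSdef, Finset.mem_filter]
      exact ⟨Finset.mem_univ _, hmem, h1, h2'⟩
  -- per-piece bound
  have hpiece : ∀ q ∈ Q, (n - 1) ^ 2 * (S q).card ≤ (fpf n).card ^ m := by
    rintro ⟨k, i, j, i', j'⟩ hq
    rw [hQ, Finset.mem_filter] at hq
    obtain ⟨-, hij, hij', hne⟩ := hq
    obtain ⟨a, b, c, d, hab, hca, hcb, hda, hdb, himp⟩ :=
      exists_abcd (X := Fin n) i j i' j' hij hij' hne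
    have hsub2 : S (k, i, j, i', j') ⊆
        Finset.univ.filter (fun α : Fin m → Equiv.Perm (Fin n) =>
          (∀ t, α t ∈ fpf n) ∧ α a k = α c k ∧ α b k = α d k) := by
      intro α hα
      rw [hSdef, Finset.mem_filter] at hα
      obtain ⟨-, hmem, h1, h2'⟩ := hα
      rw [Finset.mem_filter]
      exact ⟨Finset.mem_univ _, hmem, himp (fun t => α t k) h1 h2'⟩
    calc (n - 1) ^ 2 * (S (k, i, j, i', j')).card
        ≤ (n - 1) ^ 2 * (Finset.univ.filter (fun α : Fin m → Equiv.Perm (Fin n) =>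
            (∀ t, α t ∈ fpf n) ∧ α a k = α c k ∧ α b k = α d k)).card :=
          Nat.mul_le_mul_left _ (Finset.card_le_card hsub2)
      _ ≤ (fpf n).card ^ m := prod_count m n hm2 k a b c d hab hca hcb hda hdb
  -- total nat bound
  have hQcard : Q.card ≤ n * m ^ 4 := by
    calc Q.card ≤ Fintype.card (Fin n × Fin m × Fin m × Fin m × Fin m) := by
          rw [← Finset.card_univ]; exact Finset.card_filter_le _ _
      _ = n * m ^ 4 := by
          simp only [Fintype.card_prod, Fintype.card_fin]; ring
  have hnat : (n - 1) ^ 2 * L.card ≤ n * m ^ 4 * (fpf n).card ^ m := by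
    calc (n - 1) ^ 2 * L.card ≤ (n - 1) ^ 2 * (Q.biUnion S).card :=
          Nat.mul_le_mul_left _ (Finset.card_le_card hsub)
      _ ≤ (n - 1) ^ 2 * ∑ q ∈ Q, (S q).card :=
          Nat.mul_le_mul_left _ (Finset.card_biUnion_le)
      _ = ∑ q ∈ Q, (n - 1) ^ 2 * (S q).card := Finset.mul_sum _ _ _
      _ ≤ ∑ _q ∈ Q, (fpf n).card ^ m := Finset.sum_le_sum hpiece
      _ = Q.card * (fpf n).card ^ m := by rw [Finset.sum_const, smul_eq_mul]
      _ ≤ n * m ^ 4 * (fpf n).card ^ m := Nat.mul_le_mul_right _ hQcard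
  -- pass to ℝ
  have hcast : (((n - 1) : ℕ) : ℝ) = (n : ℝ) - 1 := by
    rw [Nat.cast_sub (by omega)]; simp
  have hR : ((n : ℝ) - 1) ^ 2 * (L.card : ℝ) ≤ n * m ^ 4 * ((fpf n).card : ℝ) ^ m := by
    rw [← hcast]
    exact_mod_cast hnat
  have hn2 : (2 : ℝ) ≤ (n : ℝ) := by exact_mod_cast h2
  have hnpos : (0 : ℝ) < n := by linarith
  have hLpos : (0 : ℝ) ≤ (L.card : ℝ) := Nat.cast_nonneg _
  have hPpos : (0 : ℝ) ≤ ((fpf n).card : ℝ) ^ m := by positivity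
  have hMpos : (0 : ℝ) ≤ (m : ℝ) ^ 4 := by positivity
  rw [div_mul_eq_mul_div, le_div_iff₀ hnpos]
  -- goal : L.card * n ≤ 4 * m^4 * P  ... roughly
  have h1 : (n:ℝ) * (((n:ℝ) - 1) ^ 2 * (L.card : ℝ))
      ≤ (n:ℝ) * ((n:ℝ) * (m:ℝ) ^ 4 * ((fpf n).card : ℝ) ^ m) :=
    mul_le_mul_of_nonneg_left hR hnpos.le
  have h2 : (n:ℝ) * ((n:ℝ) * (m:ℝ) ^ 4 * ((fpf n).card : ℝ) ^ m)
      ≤ 4 * ((n:ℝ) - 1) ^ 2 * ((m:ℝ) ^ 4 * ((fpf n).card : ℝ) ^ m) := by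
    nlinarith [mul_nonneg (mul_nonneg (show (0:ℝ) ≤ 3 * (n:ℝ) - 2 by linarith)
      (show (0:ℝ) ≤ (n:ℝ) - 2 by linarith)) (mul_nonneg hMpos hPpos)]
  have hq : (0:ℝ) < ((n:ℝ) - 1) ^ 2 := by nlinarith
  have h3 : ((n:ℝ) - 1) ^ 2 * ((L.card : ℝ) * (n:ℝ))
      ≤ ((n:ℝ) - 1) ^ 2 * (4 * (m:ℝ) ^ 4 * ((fpf n).card : ℝ) ^ m) := by nlinarith [h1, h2]
  exact le_of_mul_le_mul_left h3 hq
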